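/- Let d ≥ 2 and let f : ℝ^d → ℝ be continuously differentiable. Assume that for every p ∈ ℝ^d the matrix p ⊗ ∇f(p) is symmetric. Then ∇f(p) is parallel to p for every p, and f is rotation invariant: f(R p) = f(p) for every p ∈ ℝ^d and every R ∈ SO(d). -/

import Mathlib

open scoped BigOperators

/-- Euclidean gradient of a scalar function on `ℝ^d`. -/
noncomputable def grad {d : ℕ} (f : (Fin d → ℝ) → ℝ) (y : Fin d → ℝ) : Fin d → ℝ :=
  fun i => fderiv ℝ f y (Pi.single i 1)

-- fderiv applied to v = sum v_i * grad
lemma fderiv_eq_sum {d : ℕ} (f : (Fin d → ℝ) → ℝ) (p v : Fin d → ℝ) :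
    fderiv ℝ f p v = ∑ i, v i * grad f p i := by
  have hv : v = ∑ i, v i • (Pi.single i 1 : Fin d → ℝ) := by
    funext j
    simp [Finset.sum_apply, Pi.single_apply]
  conv_lhs => rw [hv]
  rw [map_sum]
  simp [grad, smul_eq_mul]

lemma key {d : ℕ} (f : (Fin d → ℝ) → ℝ)
    (hsym : ∀ p : Fin d → ℝ,
      (Matrix.of fun i j : Fin d => p i * grad f p j).IsSymm)
    (p v : Fin d → ℝ) (hp : p ≠ 0) (hpv : ∑ i, p i * v i = 0) :
    fderiv ℝ f p v = 0 := by
  obtain ⟨i₀, hi₀⟩ := Function.ne_iff.mp hp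
  simp only [Pi.zero_apply] at hi₀
  have hs : ∀ i j, p j * grad f p i = p i * grad f p j := fun i j =>
    (hsym p).apply i j
  rw [fderiv_eq_sum]
  have h1 : p i₀ * ∑ i, v i * grad f p i = 0 := by
    rw [Finset.mul_sum]
    calc ∑ i, p i₀ * (v i * grad f p i)
        = ∑ i, v i * (p i₀ * grad f p i) := Finset.sum_congr rfl fun i _ => by ring
      _ = ∑ i, v i * (p i * grad f p i₀) := by
          refine Finset.sum_congr rfl fun i _ => ?_
          rw [hs i i₀]
      _ = (∑ i, p i * v i) * grad f p i₀ := by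
          rw [Finset.sum_mul]
          exact Finset.sum_congr rfl fun i _ => by ring
      _ = 0 := by rw [hpv, zero_mul]
  exact (mul_eq_zero.mp h1).resolve_left hi₀

lemma Qbilin {d : ℕ} (a b c e : ℝ) (x w : Fin d → ℝ) :
    ∑ i, (a * x i + b * w i) * (c * x i + e * w i)
      = a * c * ∑ i, x i * x i + (a * e + b * c) * ∑ i, x i * w i
        + b * e * ∑ i, w i * w i := by
  rw [Finset.mul_sum, Finset.mul_sum, Finset.mul_sum, ← Finset.sum_add_distrib,
    ← Finset.sum_add_distrib]
  exact Finset.sum_congr rfl fun i _ => by ring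

lemma path_const {d : ℕ} (f : (Fin d → ℝ) → ℝ) (hf : ContDiff ℝ 1 f)
    (hsym : ∀ p : Fin d → ℝ,
      (Matrix.of fun i j : Fin d => p i * grad f p j).IsSymm)
    (x w : Fin d → ℝ) (hxw : ∑ i, x i * w i = 0)
    (hx : 0 < ∑ i, x i * x i) (s : ℝ)
    (hs : s ^ 2 * ∑ i, w i * w i = ∑ i, x i * x i) :
    ∀ t : ℝ, f (Real.cos t • x + (s * Real.sin t) • w) = f x := by
  set γ : ℝ → (Fin d → ℝ) := fun t => Real.cos t • x + (s * Real.sin t) • w with hγ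
  have hQγ : ∀ t, ∑ i, γ t i * γ t i = ∑ i, x i * x i := by
    intro t
    have : ∑ i, γ t i * γ t i
        = Real.cos t * Real.cos t * ∑ i, x i * x i
          + (Real.cos t * (s * Real.sin t) + (s * Real.sin t) * Real.cos t) * ∑ i, x i * w i
          + (s * Real.sin t) * (s * Real.sin t) * ∑ i, w i * w i := by
      simpa [γ] using Qbilin (Real.cos t) (s * Real.sin t) (Real.cos t) (s * Real.sin t) x w
    rw [this, hxw, mul_zero, add_zero]
    have h1 : (s * Real.sin t) * (s * Real.sin t) * ∑ i, w i * w i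
        = Real.sin t ^ 2 * (s ^ 2 * ∑ i, w i * w i) := by ring
    rw [h1, hs]
    have := Real.sin_sq_add_cos_sq t
    nlinarith [this]
  have hderiv : ∀ t, HasDerivAt (fun u => f (γ u)) 0 t := by
    intro t
    have h1 : HasDerivAt (fun u : ℝ => Real.cos u • x) ((-Real.sin t) • x) t :=
      (Real.hasDerivAt_cos t).smul_const x
    have h2 : HasDerivAt (fun u : ℝ => (s * Real.sin u) • w) ((s * Real.cos t) • w) t :=
      (((Real.hasDerivAt_sin t).const_mul s).smul_const w)
    have hγd : HasDerivAt γ ((-Real.sin t) • x + (s * Real.cos t) • w) t := h1.add h2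
    have hfd : HasFDerivAt f (fderiv ℝ f (γ t)) (γ t) :=
      (hf.differentiable one_ne_zero (γ t)).hasFDerivAt
    have hcomp := hfd.comp_hasDerivAt t hγd
    have hne : γ t ≠ 0 := by
      intro h0
      have := hQγ t
      rw [h0] at this
      simp at this
      linarith
    have horth : ∑ i, γ t i * ((-Real.sin t) • x + (s * Real.cos t) • w) i = 0 := by
      have : ∑ i, (Real.cos t * x i + (s * Real.sin t) * w i)
          * ((-Real.sin t) * x i + (s * Real.cos t) * w i)
          = Real.cos t * (-Real.sin t) * ∑ i, x i * x i
            + (Real.cos t * (s * Real.cos t) + (s * Real.sin t) * (-Real.sin t)) * ∑ i, x i * w i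
            + (s * Real.sin t) * (s * Real.cos t) * ∑ i, w i * w i :=
        Qbilin _ _ _ _ x w
      simp only [γ, Pi.add_apply, Pi.smul_apply, smul_eq_mul]
      rw [this, hxw, mul_zero, add_zero]
      have h1 : (s * Real.sin t) * (s * Real.cos t) * ∑ i, w i * w i
          = Real.sin t * Real.cos t * (s ^ 2 * ∑ i, w i * w i) := by ring
      rw [h1, hs]
      ring
    have := key f hsym (γ t) _ hne horth
    rwa [this] at hcomp
  have hdiffh : Differentiable ℝ (fun u : ℝ => f (γ u)) := fun t => (hderiv t).differentiableAt
  have hcst : ∀ t : ℝ, f (γ t) = f (γ 0) :=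
    fun t => is_const_of_deriv_eq_zero hdiffh (fun t => (hderiv t).deriv) t 0
  intro t
  have := hcst t
  simpa [γ] using this

lemma Q_nonneg {d : ℕ} (x : Fin d → ℝ) : 0 ≤ ∑ i, x i * x i :=
  Finset.sum_nonneg fun i _ => mul_self_nonneg _

lemma Q_eq_zero {d : ℕ} {x : Fin d → ℝ} (h : ∑ i, x i * x i = 0) : x = 0 := by
  funext j
  have := (Finset.sum_eq_zero_iff_of_nonneg (fun i _ => mul_self_nonneg (x i))).mp h j
    (Finset.mem_univ j)
  exact mul_self_eq_zero.mp this

lemma exists_perp {d : ℕ} (hd : 2 ≤ d) (x : Fin d → ℝ) :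
    ∃ z : Fin d → ℝ, z ≠ 0 ∧ ∑ i, x i * z i = 0 := by
  have h0 : (0 : ℕ) < d := by omega
  have h1 : (1 : ℕ) < d := by omega
  set i0 : Fin d := ⟨0, h0⟩
  set i1 : Fin d := ⟨1, h1⟩
  have hne : i0 ≠ i1 := by simp [i0, i1, Fin.ext_iff]
  by_cases hx0 : x i0 = 0
  · refine ⟨Pi.single i0 1, ?_, ?_⟩
    · intro h
      have := congrFun h i0
      simp at this
    · have : ∀ i, x i * (Pi.single i0 1 : Fin d → ℝ) i = if i = i0 then x i0 else 0 := by
        intro i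
        by_cases h : i = i0 <;> simp [Pi.single_apply, h]
      simp [this, hx0]
  · set z : Fin d → ℝ := x i1 • (Pi.single i0 1 : Fin d → ℝ) - x i0 • (Pi.single i1 1 : Fin d → ℝ) with hz
    refine ⟨z, ?_, ?_⟩
    · intro h
      have := congrFun h i1
      simp [hz, Pi.single_apply, hne.symm, hne] at this
      exact hx0 this
    · have hterm : ∀ i, x i * z i
          = (if i = i0 then x i0 * x i1 else 0) - (if i = i1 then x i1 * x i0 else 0) := by
        intro i
        by_cases h : i = i0 <;> by_cases h' : i = i1
        · exact absurd (h ▸ h') hne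
        · simp [hz, Pi.single_apply, h, h', hne]
        · simp [hz, Pi.single_apply, h, h', hne.symm]
        · simp [hz, Pi.single_apply, h, h']
      simp only [hterm]
      rw [Finset.sum_sub_distrib]
      simp
      ring

lemma sphere_const {d : ℕ} (hd : 2 ≤ d) (f : (Fin d → ℝ) → ℝ) (hf : ContDiff ℝ 1 f)
    (hsym : ∀ p : Fin d → ℝ,
      (Matrix.of fun i j : Fin d => p i * grad f p j).IsSymm)
    (x y : Fin d → ℝ) (hQ : ∑ i, x i * x i = ∑ i, y i * y i) : f x = f y := by
  rcases eq_or_lt_of_le (Q_nonneg x) with h0 | hpos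
  · rw [Q_eq_zero h0.symm, Q_eq_zero (by rw [← hQ, ← h0] : ∑ i, y i * y i = 0)]
  set Qx := ∑ i, x i * x i with hQx
  -- main connecting step when y = α • x + w with w ⟂ x, w ≠ 0
  have main : ∀ x' w : Fin d → ℝ, (∑ i, x' i * x' i) = Qx →
      (∑ i, x' i * w i) = 0 → 0 < ∑ i, w i * w i →
      ∀ α : ℝ, (α ^ 2 * Qx + ∑ i, w i * w i = Qx) →
      f (α • x' + w) = f x' := by
    intro x' w hQx' hxw hw α hα
    set Qw := ∑ i, w i * w i with hQw
    set s : ℝ := Real.sqrt (Qx / Qw) with hs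
    have hs2 : s ^ 2 * Qw = Qx := by
      rw [hs, Real.sq_sqrt (by positivity)]
      field_simp
    have hα2 : α ^ 2 ≤ 1 := by nlinarith
    have hcos : Real.cos (Real.arccos α) = α :=
      Real.cos_arccos (by nlinarith) (by nlinarith)
    have hsin : Real.sin (Real.arccos α) = Real.sqrt (1 - α ^ 2) := Real.sin_arccos α
    have hssin : s * Real.sin (Real.arccos α) = 1 := by
      rw [hsin, hs, ← Real.sqrt_mul (by positivity)]
      have h1 : Qx / Qw * (1 - α ^ 2) = 1 := by
        have : (1 - α ^ 2) * Qx = Qw := by nlinarith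
        field_simp
        nlinarith
      rw [h1, Real.sqrt_one]
    have := path_const f hf hsym x' w hxw (by rw [hQx']; exact hpos) s
      (by rw [hQw] at hs2; rw [hs2, hQx']) (Real.arccos α)
    rw [hcos, hssin, one_smul] at this
    exact this
  -- decompose y
  set α : ℝ := (∑ i, x i * y i) / Qx with hα
  set w : Fin d → ℝ := y - α • x with hw
  have hxw : ∑ i, x i * w i = 0 := by
    have : ∀ i, x i * w i = x i * y i - α * (x i * x i) := by
      intro i; simp [hw]; ring
    simp only [this]
    rw [Finset.sum_sub_distrib, ← Finset.mul_sum, hα]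
    field_simp
    simp only [pow_two, ← hQx, sub_self, mul_zero]
  have hy : y = α • x + w := by simp [hw]
  have hQy : α ^ 2 * Qx + ∑ i, w i * w i = Qx := by
    have hexp : ∑ i, y i * y i
        = α * α * (∑ i, x i * x i) + (α + α) * ∑ i, x i * w i + ∑ i, w i * w i := by
      rw [hy]
      have h := Qbilin α 1 α 1 x w
      simpa using h
    rw [hxw] at hexp
    simp only [hQx] at hexp ⊢
    nlinarith [hQ, hexp]
  rcases eq_or_lt_of_le (Q_nonneg w) with hw0 | hwpos
  · -- w = 0 : y = α • x with α = ±1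
    have hweq : w = 0 := Q_eq_zero hw0.symm
    have hα1 : α ^ 2 = 1 := by
      rw [hweq] at hQy
      simp at hQy
      nlinarith
    have hfac : (α - 1) * (α + 1) = 0 := by nlinarith
    rcases mul_eq_zero.mp hfac with h | h
    · -- α = 1, y = x
      have hα' : α = 1 := by linarith
      rw [hy, hα', hweq, one_smul, add_zero]
    · -- α = -1, y = -x
      have hα' : α = -1 := by linarith
      have hyx : y = -x := by rw [hy, hα', hweq, add_zero, neg_one_smul]
      obtain ⟨z, hz0, hxz⟩ := exists_perp hd x
      have hQz : 0 < ∑ i, z i * z i := by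
        rcases eq_or_lt_of_le (Q_nonneg z) with h' | h'
        · exact absurd (Q_eq_zero h'.symm) hz0
        · exact h'
      set c : ℝ := Real.sqrt (Qx / ∑ i, z i * z i) with hc
      set z' : Fin d → ℝ := c • z with hz'
      have hQz' : (∑ i, z' i * z' i) = Qx := by
        have : ∀ i, z' i * z' i = c ^ 2 * (z i * z i) := by
          intro i; simp [hz']; ring
        simp only [this]
        rw [← Finset.mul_sum, hc, Real.sq_sqrt (by positivity)]
        field_simp
        have hzne := hQz.ne'
        simp only [← pow_two] at hzne
        exact div_self hzne
      have hxz' : ∑ i, x i * z' i = 0 := by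
        have : ∀ i, x i * z' i = c * (x i * z i) := by
          intro i; simp [hz']; ring
        simp only [this]
        rw [← Finset.mul_sum, hxz, mul_zero]
      have h1 : f ((0 : ℝ) • x + z') = f x :=
        main x z' rfl hxz' (hQz' ▸ hpos) 0 (by rw [hQz']; ring)
      have hnxQ : (∑ i, (-x) i * (-x) i) = Qx := by
        simp only [Pi.neg_apply, neg_mul_neg]
        exact hQx.symm
      have hnxz' : ∑ i, (-x) i * z' i = 0 := by
        simp only [Pi.neg_apply, neg_mul]
        rw [Finset.sum_neg_distrib, hxz', neg_zero]
      have h2 : f ((0 : ℝ) • (-x) + z') = f (-x) :=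
        main (-x) z' hnxQ hnxz' (hQz' ▸ hpos) 0 (by rw [hQz']; ring)
      rw [zero_smul, zero_add] at h1 h2
      rw [hyx, ← h2, h1]
  · rw [hy, main x w rfl hxw hwpos α hQy]

open Matrix

/-- if `p ⊗ ∇f(p)` is symmetric for every `p`, then `∇f(p)` is parallel to `p`
for every `p`, and `f` is invariant under `SO(d)`. -/
theorem stmt2 (d : ℕ) (hd : 2 ≤ d) (f : (Fin d → ℝ) → ℝ) (hf : ContDiff ℝ 1 f)
    (hsym : ∀ p : Fin d → ℝ,
      (Matrix.of fun i j : Fin d => p i * grad f p j).IsSymm) :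
    (∀ p : Fin d → ℝ, ¬ LinearIndependent ℝ ![p, grad f p]) ∧
    (∀ (p : Fin d → ℝ) (R : Matrix (Fin d) (Fin d) ℝ),
      R ∈ Matrix.specialOrthogonalGroup (Fin d) ℝ → f (R.mulVec p) = f p) := by
  constructor
  · intro p hli
    rw [linearIndependent_fin2] at hli
    obtain ⟨hg, hns⟩ := hli
    simp only [Matrix.cons_val_one, Matrix.head_cons, Matrix.cons_val_zero] at hg hns
    obtain ⟨i₀, hi₀⟩ := Function.ne_iff.mp hg
    simp only [Pi.zero_apply] at hi₀
    have hs : ∀ i j, p j * grad f p i = p i * grad f p j := fun i j => (hsym p).apply i j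
    apply hns (p i₀ / grad f p i₀)
    funext j
    have := hs i₀ j
    simp only [Pi.smul_apply, smul_eq_mul]
    field_simp
    linarith [hs j i₀]
  · intro p R hR
    rw [Matrix.mem_specialOrthogonalGroup_iff] at hR
    have hRo : star R * R = 1 := (Matrix.mem_orthogonalGroup_iff' (Fin d) ℝ).mp hR.1
    have hstar : star R = R.transpose := by
      ext i j
      simp [Matrix.star_apply]
    rw [hstar] at hRo
    apply sphere_const hd f hf hsym
    have h1 : ∑ i, R.mulVec p i * R.mulVec p i = (R.mulVec p) ⬝ᵥ (R.mulVec p) := rfl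
    have h2 : ∑ i, p i * p i = p ⬝ᵥ p := rfl
    rw [h1, h2]
    calc (R.mulVec p) ⬝ᵥ (R.mulVec p)
        = ((R.mulVec p) ᵥ* R) ⬝ᵥ p := by rw [Matrix.dotProduct_mulVec]
      _ = (p ᵥ* (R.transpose * R)) ⬝ᵥ p := by rw [Matrix.vecMul_mulVec]
      _ = (p ᵥ* (1 : Matrix (Fin d) (Fin d) ℝ)) ⬝ᵥ p := by rw [hRo]
      _ = p ⬝ᵥ p := by rw [Matrix.vecMul_one]
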